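/- Consider the Erdős–Rényi graph process G_0,…,G_m on n vertices and let X_∧(G_i) = A_∧(G_i) − E[A_∧(G_i)|G_{i−1}], where A_∧(G_i) is the number of cherries created at step i. Then almost surely, E[X_∧(G_i)² | G_{i−1}] ≤ (32/n)·Σ_u D_u(G_{i−1})², where D_u(G) = d_u(G) − 2(i−1)/n is the degree deviation at step i−1. -/

import Mathlib

open scoped BigOperators Classical

-- Variance is minimized at the mean: for any c, ∑ (f x - mean)² ≤ ∑ (f x - c)²
lemma mean_sq_le {α : Type*} (s : Finset α) (f : α → ℝ) (c : ℝ) :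
    (∑ x ∈ s, (f x - (∑ y ∈ s, f y) / (s.card : ℝ)) ^ 2)
      ≤ ∑ x ∈ s, (f x - c) ^ 2 := by
  rcases s.eq_empty_or_nonempty with rfl | hs
  · simp
  set μ : ℝ := (∑ y ∈ s, f y) / (s.card : ℝ) with hμ
  have hcard : (s.card : ℝ) ≠ 0 := by
    exact_mod_cast (Finset.card_pos.mpr hs).ne'
  have h0 : ∑ x ∈ s, (f x - μ) = 0 := by
    rw [Finset.sum_sub_distrib, Finset.sum_const, nsmul_eq_mul, hμ]
    field_simp
    simp
  have key : ∑ x ∈ s, (f x - c) ^ 2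
      = (∑ x ∈ s, (f x - μ) ^ 2) + 2 * (μ - c) * (∑ x ∈ s, (f x - μ))
        + (s.card : ℝ) * (μ - c) ^ 2 := by
    rw [Finset.mul_sum, ← Finset.sum_add_distrib]
    rw [show ((s.card : ℝ) * (μ - c) ^ 2) = ∑ _x ∈ s, (μ - c) ^ 2 by
      rw [Finset.sum_const, nsmul_eq_mul]]
    rw [← Finset.sum_add_distrib]
    exact Finset.sum_congr rfl fun x _ => by ring
  rw [key, h0]
  have hnn := mul_nonneg (Nat.cast_nonneg s.card : (0:ℝ) ≤ (s.card:ℝ)) (sq_nonneg (μ - c))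
  linarith

theorem stmt_19 (n m i : ℕ) (hn : 2 ≤ n) (hi : 1 ≤ i) (him : i ≤ m)
    (hm2 : 2 * m ≤ n * (n - 1) / 2)
    (G : SimpleGraph (Fin n)) (hkedges : G.edgeFinset.card = i - 1) :
    -- NE : the set of (ordered) non-edges of G = G_{i-1}
    ∀ NE : Finset (Fin n × Fin n),
      NE = Finset.univ.filter (fun p : Fin n × Fin n => p.1 ≠ p.2 ∧ ¬ G.Adj p.1 p.2) →
    -- condE = E[A_∧(G_i) | G_{i-1}], averaging over a uniformly random non-edge
    ∀ condE : ℝ,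
      condE = (∑ p ∈ NE, (2 * (G.degree p.1 : ℝ) + 2 * (G.degree p.2 : ℝ)))
                / (NE.card : ℝ) →
    -- E[X_∧(G_i)² | G_{i-1}] ≤ (32/n) Σ_u D_u(G_{i-1})²
    (∑ p ∈ NE, ((2 * (G.degree p.1 : ℝ) + 2 * (G.degree p.2 : ℝ)) - condE) ^ 2)
        / (NE.card : ℝ)
      ≤ (32 / (n : ℝ)) * ∑ u : Fin n, ((G.degree u : ℝ) - 2 * ((i : ℝ) - 1) / n) ^ 2 := by
  intro NE hNE condE hcondE
  have hn0 : (0:ℝ) < (n:ℝ) := by positivity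
  -- abbreviations
  set D : Fin n → ℝ := fun u => (G.degree u : ℝ) - 2 * ((i : ℝ) - 1) / n with hD
  set T : ℝ := ∑ u : Fin n, (D u) ^ 2 with hT
  have hT0 : 0 ≤ T := Finset.sum_nonneg fun u _ => sq_nonneg _
  -- the set of ordered distinct pairs and ordered edges
  set B : Finset (Fin n × Fin n) :=
    Finset.univ.filter (fun p : Fin n × Fin n => p.1 ≠ p.2) with hB
  set A : Finset (Fin n × Fin n) :=
    Finset.univ.filter (fun p : Fin n × Fin n => G.Adj p.1 p.2) with hA
  have hNEB : NE = B \ A := by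
    rw [hNE, hB, hA]
    ext p
    simp only [Finset.mem_filter, Finset.mem_univ, true_and, Finset.mem_sdiff]
  have hAB : A ⊆ B := by
    intro p hp
    rw [hA] at hp; rw [hB]
    simp only [Finset.mem_filter, Finset.mem_univ, true_and] at *
    exact hp.ne
  -- cardinalities
  have hcardA : A.card = 2 * (i - 1) := by
    have h1 : A.card = ∑ u : Fin n, G.degree u := by
      rw [hA, Finset.card_filter, Fintype.sum_prod_type]
      refine Finset.sum_congr rfl fun u _ => ?_
      rw [SimpleGraph.degree, SimpleGraph.neighborFinset_eq_filter, Finset.card_filter]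
    rw [h1, SimpleGraph.sum_degrees_eq_twice_card_edges, hkedges]
  have hcardB : B.card = n * (n - 1) := by
    have h1 : B.card = ∑ u : Fin n, (Finset.univ.filter (fun w : Fin n => u ≠ w)).card := by
      rw [hB, Finset.card_filter, Fintype.sum_prod_type]
      refine Finset.sum_congr rfl fun u _ => ?_
      rw [Finset.card_filter]
    rw [h1]
    have h2 : ∀ u : Fin n, (Finset.univ.filter (fun w : Fin n => u ≠ w)).card = n - 1 := by
      intro u
      rw [Finset.filter_ne, Finset.card_erase_of_mem (Finset.mem_univ u)]
      simp
    simp only [h2]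
    simp [mul_comm]
  have hcardNE : NE.card = n * (n - 1) - 2 * (i - 1) := by
    rw [hNEB, Finset.card_sdiff_of_subset hAB, hcardA, hcardB]
  -- key numeric facts
  have hge2 : 2 ≤ n * (n - 1) := by
    calc 2 = 2 * 1 := by norm_num
      _ ≤ n * (n - 1) := Nat.mul_le_mul hn (by omega)
  have hnn : 4 * (i - 1) ≤ n * (n - 1) := by omega
  have hkpos : 0 < NE.card := by
    rw [hcardNE]; omega
  have hkR : (0:ℝ) < (NE.card : ℝ) := by exact_mod_cast hkpos
  have h2k : (n : ℝ) * ((n : ℝ) - 1) ≤ 2 * (NE.card : ℝ) := by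
    have hnat : n * (n - 1) ≤ 2 * NE.card := by omega
    have hcast : ((n * (n - 1) : ℕ) : ℝ) = (n : ℝ) * ((n : ℝ) - 1) := by
      have : (1:ℕ) ≤ n := by omega
      push_cast [Nat.cast_sub this]
      ring
    calc (n : ℝ) * ((n : ℝ) - 1) = ((n * (n - 1) : ℕ) : ℝ) := hcast.symm
      _ ≤ ((2 * NE.card : ℕ) : ℝ) := by exact_mod_cast hnat
      _ = 2 * (NE.card : ℝ) := by push_cast; ring
  -- step 1: variance ≤ second moment about c
  set f : Fin n × Fin n → ℝ :=
    fun p => 2 * (G.degree p.1 : ℝ) + 2 * (G.degree p.2 : ℝ) with hf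
  set c : ℝ := 8 * ((i : ℝ) - 1) / n with hc
  have step1 : (∑ p ∈ NE, (f p - condE) ^ 2) ≤ ∑ p ∈ NE, (f p - c) ^ 2 := by
    rw [hcondE]
    exact mean_sq_le NE f c
  -- step 2: pointwise bound
  have hfc : ∀ p : Fin n × Fin n, f p - c = 2 * D p.1 + 2 * D p.2 := by
    intro p
    rw [hf, hc, hD]
    field_simp
    ring
  have step2 : (∑ p ∈ NE, (f p - c) ^ 2)
      ≤ ∑ p ∈ NE, (8 * (D p.1) ^ 2 + 8 * (D p.2) ^ 2) := by
    refine Finset.sum_le_sum fun p _ => ?_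
    rw [hfc p]
    nlinarith [sq_nonneg (D p.1 - D p.2)]
  -- step 3: sum over NE ≤ sum over B
  have step3 : (∑ p ∈ NE, (8 * (D p.1) ^ 2 + 8 * (D p.2) ^ 2))
      ≤ ∑ p ∈ B, (8 * (D p.1) ^ 2 + 8 * (D p.2) ^ 2) := by
    refine Finset.sum_le_sum_of_subset_of_nonneg ?_ (fun p _ _ => by positivity)
    rw [hNEB]; exact Finset.sdiff_subset
  -- step 4: sum over B equals 16(n-1)T
  have step4 : (∑ p ∈ B, (8 * (D p.1) ^ 2 + 8 * (D p.2) ^ 2))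
      = 16 * ((n : ℝ) - 1) * T := by
    rw [hB, Finset.sum_filter, Fintype.sum_prod_type]
    have hinner : ∀ u : Fin n,
        (∑ w : Fin n, if u ≠ w then 8 * (D u) ^ 2 + 8 * (D w) ^ 2 else 0)
        = (n : ℝ) * (8 * (D u) ^ 2) + 8 * T - (16 * (D u) ^ 2) := by
      intro u
      have : ∀ w : Fin n, (if u ≠ w then 8 * (D u) ^ 2 + 8 * (D w) ^ 2 else 0)
          = (8 * (D u) ^ 2 + 8 * (D w) ^ 2)
            - (if u = w then 8 * (D u) ^ 2 + 8 * (D w) ^ 2 else 0) := by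
        intro w
        by_cases h : u = w <;> simp [h]
      simp only [this]
      rw [Finset.sum_sub_distrib, Finset.sum_ite_eq Finset.univ u
        (fun w => 8 * (D u) ^ 2 + 8 * (D w) ^ 2)]
      simp only [Finset.mem_univ, if_true]
      rw [Finset.sum_add_distrib, Finset.sum_const, Finset.card_univ, Fintype.card_fin,
        nsmul_eq_mul, ← Finset.mul_sum, ← hT]
      ring
    simp only [hinner]
    rw [Finset.sum_sub_distrib, Finset.sum_add_distrib, ← Finset.mul_sum]
    have e1 : (∑ u : Fin n, 8 * D u ^ 2) = 8 * T := by rw [hT, Finset.mul_sum]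
    have e2 : (∑ u : Fin n, 16 * D u ^ 2) = 16 * T := by rw [hT, Finset.mul_sum]
    have e3 : (∑ _u : Fin n, (8 * T : ℝ)) = (n : ℝ) * (8 * T) := by
      rw [Finset.sum_const, Finset.card_univ, Fintype.card_fin, nsmul_eq_mul]
    rw [e1, e2, e3]
    ring
  -- combine
  have hnum : (∑ p ∈ NE, (f p - condE) ^ 2) ≤ 16 * ((n : ℝ) - 1) * T := by
    calc (∑ p ∈ NE, (f p - condE) ^ 2) ≤ ∑ p ∈ NE, (f p - c) ^ 2 := step1
      _ ≤ ∑ p ∈ NE, (8 * (D p.1) ^ 2 + 8 * (D p.2) ^ 2) := step2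
      _ ≤ ∑ p ∈ B, (8 * (D p.1) ^ 2 + 8 * (D p.2) ^ 2) := step3
      _ = 16 * ((n : ℝ) - 1) * T := step4
  have final : (∑ p ∈ NE, (f p - condE) ^ 2) / (NE.card : ℝ) ≤ (32 / (n:ℝ)) * T := by
    rw [div_le_iff₀ hkR]
    calc (∑ p ∈ NE, (f p - condE) ^ 2) ≤ 16 * ((n : ℝ) - 1) * T := hnum
      _ ≤ 32 / (n:ℝ) * T * (NE.card : ℝ) := by
          rw [div_mul_eq_mul_div, div_mul_eq_mul_div, le_div_iff₀ hn0]
          nlinarith [h2k, hT0, hkR]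
  exact final
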